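/- arXiv:1304.2971 — 2 statements merged into one kernel-verified Lean document; each statement's English description precedes it below -/
import Mathlib

section
/- For any real ν ≥ 1 and any natural number r ≥ 2, there exists a constant B > 0 depending only on r (and ν) such that for every multi-index α ∈ ℕ³, the sum over all componentwise decompositions α = α₁ + α₂ of C_α^{α₁} · ((α₁−r)!)^ν · ((α₂−r)!)^ν / ((α−r)!)^ν is at most B. -/
open Nat Finset

def Kc (r : ℕ) : ℕ := 2^(4*r) * r^r * (r+1) * (r+2)

lemma fact_mul_fact_le (r n k : ℕ) (hk : k ≤ n) :
    (k - r)! * (n - k - r)! ≤ (n - r)! := by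
  rcases le_or_gt r k with h1 | h1
  · rcases le_or_gt r (n - k) with h2 | h2
    · calc (k - r)! * (n - k - r)! ≤ ((k - r) + (n - k - r))! :=
          Nat.le_of_dvd (Nat.factorial_pos _)
            (Nat.factorial_mul_factorial_dvd_factorial_add _ _)
      _ ≤ (n - r)! := Nat.factorial_le (by omega)
    · have : n - k - r = 0 := by omega
      rw [this]
      simpa using Nat.factorial_le (show k - r ≤ n - r by omega)
  · have : k - r = 0 := by omega
    rw [this]
    simpa using Nat.factorial_le (show n - k - r ≤ n - r by omega)

lemma nt (r n k : ℕ) (hr : 2 ≤ r) (h2 : 2 * k ≤ n) :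
    n.choose k * ((k - r)! * (n - k - r)! * ((k+1)*(k+2))) ≤ Kc r * (n - r)! := by
  have hkn : k ≤ n := by omega
  have hc : n.choose k ≤ n ^ k :=
    (Nat.choose_le_descFactorial n k).trans (Nat.descFactorial_le_pow n k)
  rcases lt_or_ge k r with hkr | hkr
  · -- k < r
    have h0 : (k - r)! = 1 := by rw [show k - r = 0 by omega]; rfl
    have hkk : (k+1)*(k+2) ≤ (r+1)*(r+2) :=
      Nat.mul_le_mul (by omega) (by omega)
    rw [h0, one_mul]
    rcases le_or_gt n (4*r) with h4 | h4
    · -- small n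
      calc n.choose k * ((n - k - r)! * ((k+1)*(k+2)))
          ≤ (4*r)^r * ((n - r)! * ((r+1)*(r+2))) := by
            refine Nat.mul_le_mul (hc.trans ?_)
              (Nat.mul_le_mul (Nat.factorial_le (by omega)) hkk)
            calc n ^ k ≤ (4*r)^k := Nat.pow_le_pow_left h4 k
            _ ≤ (4*r)^r := Nat.pow_le_pow_right (by omega) (by omega)
      _ = 2^(2*r) * r^r * (r+1) * (r+2) * (n-r)! := by
            rw [show (4:ℕ)*r = 2^2*r by norm_num, mul_pow, ← pow_mul]; ring
      _ ≤ Kc r * (n - r)! := by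
            unfold Kc
            have : (2:ℕ)^(2*r) ≤ 2^(4*r) := Nat.pow_le_pow_right (by omega) (by omega)
            exact Nat.mul_le_mul_right _ (by
              exact Nat.mul_le_mul_right _ (Nat.mul_le_mul_right _ (Nat.mul_le_mul_right _ this)))
    · -- large n
      set m := n - k - r with hm
      have hmr : m + k = n - r := by omega
      have hfac : m ! * (m+1)^k ≤ (n - r)! := by
        rw [← hmr]; exact Nat.factorial_mul_pow_le_factorial
      have hn2 : n ≤ 2 * (m+1) := by omega
      calc n.choose k * (m ! * ((k+1)*(k+2)))
          ≤ (2*(m+1))^k * (m ! * ((r+1)*(r+2))) := by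
            refine Nat.mul_le_mul (hc.trans (Nat.pow_le_pow_left hn2 k))
              (Nat.mul_le_mul_left _ hkk)
      _ = 2^k * (r+1) * (r+2) * (m ! * (m+1)^k) := by rw [mul_pow]; ring
      _ ≤ 2^(4*r) * (r+1) * (r+2) * (n - r)! := by
            refine Nat.mul_le_mul (Nat.mul_le_mul_right _ (Nat.mul_le_mul_right _
              (Nat.pow_le_pow_right (by omega) (by omega)))) hfac
      _ ≤ Kc r * (n - r)! := by
            refine Nat.mul_le_mul_right _ ?_
            unfold Kc
            have h1 : 1 ≤ r^r := Nat.one_le_pow _ _ (by omega)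
            calc 2^(4*r) * (r+1) * (r+2) = 2^(4*r) * 1 * ((r+1) * (r+2)) := by ring
            _ ≤ 2^(4*r) * r^r * ((r+1) * (r+2)) := by gcongr
            _ = 2^(4*r) * r^r * (r+1) * (r+2) := by ring
  · -- r ≤ k
    have hk2 : k ≤ n - k := by omega
    have hrnk : r ≤ n - k := le_trans hkr hk2
    have hrn : r ≤ n := by omega
    set M := (r ! * k.choose r) * (r ! * (n-k).choose r) with hM
    have hMpos : 0 < M := by
      have := Nat.choose_pos hkr
      have := Nat.choose_pos hrnk
      positivity
    refine Nat.le_of_mul_le_mul_right ?_ hMpos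
    have e1 := Nat.choose_mul_factorial_mul_factorial hkr
    have e2 := Nat.choose_mul_factorial_mul_factorial hrnk
    have e3 := Nat.choose_mul_factorial_mul_factorial hkn
    have e4 := Nat.choose_mul_factorial_mul_factorial hrn
    have key : n.choose k * ((k - r)! * (n - k - r)! * ((k+1)*(k+2))) * M
        = (n.choose r * r ! * ((k+1)*(k+2))) * (n - r)! := by
      calc n.choose k * ((k - r)! * (n - k - r)! * ((k+1)*(k+2))) * M
          = (k.choose r * r ! * (k - r)!) * ((n-k).choose r * r ! * (n - k - r)!)
            * n.choose k * ((k+1)*(k+2)) := by rw [hM]; ring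
      _ = n.choose k * k ! * (n - k)! * ((k+1)*(k+2)) := by rw [e1, e2]; ring
      _ = n ! * ((k+1)*(k+2)) := by rw [e3]
      _ = (n.choose r * r ! * ((k+1)*(k+2))) * (n - r)! := by rw [← e4]; ring
    rw [key]
    -- core: n.choose r * r! * ((k+1)*(k+2)) ≤ Kc r * M
    have core : n.choose r * r ! * ((k+1)*(k+2)) ≤ Kc r * M := by
      have d1 : n.choose r * r ! = n.descFactorial r := by
        rw [Nat.descFactorial_eq_factorial_mul_choose]; ring
      have d2 : r ! * k.choose r = k.descFactorial r := by
        rw [Nat.descFactorial_eq_factorial_mul_choose]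
      have d3 : r ! * (n-k).choose r = (n-k).descFactorial r := by
        rw [Nat.descFactorial_eq_factorial_mul_choose]
      rw [hM, d1, d2, d3]
      -- bounds
      obtain ⟨a, ha⟩ : ∃ a, n - k = a + r := ⟨n - k - r, by omega⟩
      obtain ⟨b, hb⟩ : ∃ b, k = b + r := ⟨k - r, by omega⟩
      have B1 : n ^ r ≤ 2^r * (n-k)^r := by
        rw [← mul_pow]; exact Nat.pow_le_pow_left (by omega) r
      have B2 : (n-k)^r ≤ r^r * ((n-k) + 1 - r)^r := by
        rw [← mul_pow]
        refine Nat.pow_le_pow_left ?_ r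
        have : n - k ≤ r * ((n-k) + 1 - r) := by
          rw [ha, show a + r + 1 - r = a + 1 by omega]
          have h1 : r*(a+1) = r*a + r := by ring
          have h2 : a ≤ r*a := Nat.le_mul_of_pos_left a (by omega)
          omega
        exact this
      have B3 : ((n-k) + 1 - r)^r ≤ (n-k).descFactorial r :=
        Nat.pow_sub_le_descFactorial _ _
      have B4 : (k+1)*(k+2) ≤ (r+1)*(r+2) * (k + 1 - r)^r := by
        have h1 : k + 1 - r = b + 1 := by omega
        rw [h1, hb]
        have hsq : (b+1)^2 ≤ (b+1)^r := Nat.pow_le_pow_right (by omega) hr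
        have e1 : b + r + 1 ≤ (r+1)*(b+1) := by
          have h : (r+1)*(b+1) = r*b + (b + r + 1) := by ring
          omega
        have e2 : b + r + 2 ≤ (r+2)*(b+1) := by
          have h : (r+2)*(b+1) = r*b + b + (b + r + 2) := by ring
          omega
        calc (b + r + 1) * (b + r + 2) ≤ ((r+1)*(b+1)) * ((r+2)*(b+1)) := Nat.mul_le_mul e1 e2
        _ = (r+1)*(r+2) * (b+1)^2 := by ring
        _ ≤ (r+1)*(r+2) * (b+1)^r := Nat.mul_le_mul_left _ hsq
      have B5 : (k + 1 - r)^r ≤ k.descFactorial r := Nat.pow_sub_le_descFactorial _ _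
      calc n.descFactorial r * ((k+1)*(k+2))
          ≤ n^r * ((r+1)*(r+2) * (k+1-r)^r) :=
            Nat.mul_le_mul (Nat.descFactorial_le_pow n r) B4
      _ ≤ (2^r * (n-k)^r) * ((r+1)*(r+2) * (k+1-r)^r) := Nat.mul_le_mul_right _ B1
      _ ≤ (2^r * (r^r * ((n-k)+1-r)^r)) * ((r+1)*(r+2) * (k+1-r)^r) := by
            refine Nat.mul_le_mul_right _ (Nat.mul_le_mul_left _ B2)
      _ = 2^r * r^r * (r+1) * (r+2) * ((k+1-r)^r * ((n-k)+1-r)^r) := by ring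
      _ ≤ 2^(4*r) * r^r * (r+1) * (r+2) * (k.descFactorial r * (n-k).descFactorial r) := by
            refine Nat.mul_le_mul ?_ (Nat.mul_le_mul B5 B3)
            refine Nat.mul_le_mul_right _ (Nat.mul_le_mul_right _ (Nat.mul_le_mul_right _
              (Nat.pow_le_pow_right (by omega) (by omega))))
      _ = Kc r * (k.descFactorial r * (n-k).descFactorial r) := by unfold Kc; ring
    calc (n.choose r * r ! * ((k+1)*(k+2))) * (n - r)! ≤ (Kc r * M) * (n - r)! :=
          Nat.mul_le_mul_right _ core
    _ = Kc r * (n - r)! * M := by ring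

lemma Kc_pos (r : ℕ) : 0 < Kc r := by
  unfold Kc
  have h1 : 0 < 2^(4*r) := Nat.pow_pos (by norm_num)
  have h2 : 0 < r^r := by rcases Nat.eq_zero_or_pos r with h|h; · subst h; norm_num;
                          · exact Nat.pow_pos h
  positivity

noncomputable def hfun : ℕ → ℝ := fun j => 1 / (((j:ℝ)+1)*((j:ℝ)+2))

lemma hfun_nonneg (j : ℕ) : 0 ≤ hfun j := by unfold hfun; positivity

lemma step1 (r n k : ℕ) (hr : 2 ≤ r) (hk : k ≤ n) (h2 : 2 * k ≤ n) :
    (n.choose k : ℝ) * (((k-r)! : ℝ) * ((n-k-r)! : ℝ) / ((n-r)! : ℝ))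
      ≤ (Kc r : ℝ) * hfun k := by
  have hc : (0:ℝ) < ((n-r)! : ℝ) := by positivity
  have hD : (0:ℝ) < ((k:ℝ)+1)*((k:ℝ)+2) := by positivity
  have hnt := nt r n k hr h2
  have hnt' : (n.choose k : ℝ) * (((k-r)! : ℝ) * ((n-k-r)! : ℝ) * (((k:ℝ)+1)*((k:ℝ)+2)))
      ≤ (Kc r : ℝ) * ((n-r)! : ℝ) := by exact_mod_cast hnt
  rw [hfun, mul_one_div, mul_div_assoc' , div_le_div_iff₀ hc hD]
  nlinarith [hnt']

lemma term_le (ν : ℝ) (hν : 1 ≤ ν) (r : ℕ) (hr : 2 ≤ r) (n k : ℕ) (hk : k ≤ n) :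
    (n.choose k : ℝ) * (((k-r)! : ℝ)^ν * ((n-k-r)! : ℝ)^ν / ((n-r)! : ℝ)^ν)
      ≤ (Kc r : ℝ) * (hfun k + hfun (n-k)) := by
  set a : ℝ := ((k-r)! : ℝ) with ha
  set b : ℝ := ((n-k-r)! : ℝ) with hb
  set c : ℝ := ((n-r)! : ℝ) with hc
  have hap : 0 < a := by positivity
  have hbp : 0 < b := by positivity
  have hcp : 0 < c := by positivity
  have hX : a^ν * b^ν / c^ν = (a*b/c)^ν := by
    rw [← Real.mul_rpow hap.le hbp.le, ← Real.div_rpow (by positivity) hcp.le]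
  have hX1 : a*b/c ≤ 1 := by
    rw [div_le_one hcp, ha, hb, hc]
    exact_mod_cast fact_mul_fact_le r n k hk
  have hXpos : 0 < a*b/c := by positivity
  have hmono : (a*b/c)^ν ≤ (a*b/c) := by
    nth_rewrite 2 [← Real.rpow_one (a*b/c)]
    exact Real.rpow_le_rpow_of_exponent_ge hXpos hX1 hν
  have hCpos : (0:ℝ) ≤ (n.choose k : ℝ) := by positivity
  have red : (n.choose k : ℝ) * (a^ν * b^ν / c^ν) ≤ (n.choose k : ℝ) * (a*b/c) := by
    rw [hX]; exact mul_le_mul_of_nonneg_left hmono hCpos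
  refine red.trans ?_
  rcases le_or_gt (2*k) n with h2 | h2
  · calc (n.choose k : ℝ) * (a*b/c) ≤ (Kc r : ℝ) * hfun k := step1 r n k hr hk h2
    _ ≤ (Kc r : ℝ) * (hfun k + hfun (n-k)) := by
        have := hfun_nonneg (n-k)
        have : (0:ℝ) ≤ (Kc r : ℝ) := by positivity
        nlinarith [hfun_nonneg (n-k), this]
  · have h2' : 2 * (n-k) ≤ n := by omega
    have hs := step1 r n (n-k) hr (by omega) h2'
    rw [Nat.choose_symm hk, show n - (n-k) = k by omega] at hs
    calc (n.choose k : ℝ) * (a*b/c) = (n.choose k : ℝ) * (b*a/c) := by ring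
    _ ≤ (Kc r : ℝ) * hfun (n-k) := hs
    _ ≤ (Kc r : ℝ) * (hfun k + hfun (n-k)) := by
        nlinarith [hfun_nonneg k, (show (0:ℝ) ≤ (Kc r:ℝ) by positivity)]

lemma sum_hfun_le (N : ℕ) : ∑ j ∈ range N, hfun j ≤ 1 := by
  set f : ℕ → ℝ := fun j => 1/((j:ℝ)+1) with hf
  have key : ∀ j : ℕ, hfun j = f j - f (j+1) := by
    intro j
    simp only [hf, hfun]
    have h1 : ((j:ℝ)+1) ≠ 0 := by positivity
    have h2 : ((j:ℝ)+2) ≠ 0 := by positivity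
    push_cast
    field_simp
    ring_nf
  rw [Finset.sum_congr rfl fun j _ => key j, Finset.sum_range_sub' f N]
  simp only [hf]
  have h3 : 0 ≤ 1/((N:ℝ)+1) := by positivity
  norm_num
  linarith [h3]

lemma oneD (ν : ℝ) (hν : 1 ≤ ν) (r : ℕ) (hr : 2 ≤ r) (n : ℕ) :
    ∑ k ∈ Finset.Icc 0 n,
      (n.choose k : ℝ) * (((k-r)! : ℝ)^ν * ((n-k-r)! : ℝ)^ν / ((n-r)! : ℝ)^ν)
      ≤ 2 * (Kc r : ℝ) := by
  have hIcc : Finset.Icc 0 n = Finset.range (n+1) := by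
    ext x; simp [Nat.lt_succ_iff]
  calc ∑ k ∈ Finset.Icc 0 n,
      (n.choose k : ℝ) * (((k-r)! : ℝ)^ν * ((n-k-r)! : ℝ)^ν / ((n-r)! : ℝ)^ν)
      ≤ ∑ k ∈ Finset.Icc 0 n, (Kc r : ℝ) * (hfun k + hfun (n-k)) := by
        refine Finset.sum_le_sum fun k hk => ?_
        exact term_le ν hν r hr n k (by simpa using hk)
  _ = (Kc r : ℝ) * ((∑ k ∈ range (n+1), hfun k) + ∑ k ∈ range (n+1), hfun (n-k)) := by
        rw [hIcc, ← Finset.sum_add_distrib, ← Finset.mul_sum]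
  _ = (Kc r : ℝ) * ((∑ k ∈ range (n+1), hfun k) + ∑ k ∈ range (n+1), hfun k) := by
        congr 1
        congr 1
        have := Finset.sum_range_reflect (fun j => hfun j) (n+1)
        simpa using this
  _ ≤ (Kc r : ℝ) * (1 + 1) := by
        have h1 := sum_hfun_le (n+1)
        have hK : (0:ℝ) ≤ (Kc r : ℝ) := by positivity
        nlinarith
  _ = 2 * (Kc r : ℝ) := by ring

/-- Combinatorial lemma: for `ν ≥ 1` and `r ≥ 2` there is a constant `B > 0`
(depending only on `r` and `ν`) bounding, uniformly in the multi-index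
`α ∈ ℕ³`, the sum over all componentwise decompositions `α = α₁ + α₂` of
`C_α^{α₁} · ((α₁−r)!)^ν · ((α₂−r)!)^ν / ((α−r)!)^ν`. -/
theorem stmt0 (ν : ℝ) (hν : 1 ≤ ν) (r : ℕ) (hr : 2 ≤ r) :
    ∃ B : ℝ, 0 < B ∧ ∀ α : Fin 3 → ℕ,
      ∑ α₁ ∈ Finset.Icc (0 : Fin 3 → ℕ) α,
        ((∏ j, (α j).choose (α₁ j) : ℕ) : ℝ) *
          (((∏ j, Nat.factorial (α₁ j - r) : ℕ) : ℝ) ^ ν *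
            ((∏ j, Nat.factorial (α j - α₁ j - r) : ℕ) : ℝ) ^ ν /
            ((∏ j, Nat.factorial (α j - r) : ℕ) : ℝ) ^ ν) ≤ B := by
  have hK : (0:ℝ) < (Kc r : ℝ) := by exact_mod_cast Kc_pos r
  refine ⟨(2 * (Kc r : ℝ))^3, by positivity, fun α => ?_⟩
  have hIcc : Finset.Icc (0 : Fin 3 → ℕ) α = Fintype.piFinset (fun j => Finset.Icc 0 (α j)) := by
    ext x
    simp [Fintype.mem_piFinset, Finset.mem_Icc, Pi.le_def]
  rw [hIcc]
  have hterm : ∀ x ∈ Fintype.piFinset (fun j => Finset.Icc 0 (α j)),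
      ((∏ j, (α j).choose (x j) : ℕ) : ℝ) *
          (((∏ j, Nat.factorial (x j - r) : ℕ) : ℝ) ^ ν *
            ((∏ j, Nat.factorial (α j - x j - r) : ℕ) : ℝ) ^ ν /
            ((∏ j, Nat.factorial (α j - r) : ℕ) : ℝ) ^ ν)
      = ∏ j, (((α j).choose (x j) : ℝ) *
          ((((x j - r)! : ℝ))^ν * (((α j - x j - r)! : ℝ))^ν / (((α j - r)! : ℝ))^ν)) := by
    intro x _
    push_cast
    rw [← Real.finset_prod_rpow _ _ (fun i _ => by positivity) ν,
        ← Real.finset_prod_rpow _ _ (fun i _ => by positivity) ν,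
        ← Real.finset_prod_rpow _ _ (fun i _ => by positivity) ν,
        ← Finset.prod_mul_distrib, ← Finset.prod_div_distrib, ← Finset.prod_mul_distrib]
  have hfac := Finset.prod_univ_sum (fun j : Fin 3 => Finset.Icc 0 (α j))
    (fun j k => (((α j).choose k : ℝ) *
      ((((k - r)! : ℝ))^ν * ((((α j) - k - r)! : ℝ))^ν / ((((α j) - r)! : ℝ))^ν)))
  rw [Finset.sum_congr rfl hterm, ← hfac]
  calc ∏ j : Fin 3, ∑ k ∈ Finset.Icc 0 (α j),
        (((α j).choose k : ℝ) *
          ((((k - r)! : ℝ))^ν * ((((α j) - k - r)! : ℝ))^ν / ((((α j) - r)! : ℝ))^ν))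
      ≤ ∏ _j : Fin 3, (2 * (Kc r : ℝ)) := by
        refine Finset.prod_le_prod (fun j _ => ?_) (fun j _ => oneD ν hν r hr (α j))
        refine Finset.sum_nonneg fun k _ => ?_
        positivity
  _ = (2 * (Kc r : ℝ))^3 := by
        rw [Finset.prod_const]
        norm_num
end

section
/- For all ν ≥ 1, all natural numbers r ≥ 2, and every natural number a, the sum over k = 0,…,a of binom(a,k) · ((k ∸ r)! · ((a−k) ∸ r)! / (a ∸ r)!)^ν is bounded by a constant B > 0 depending only on r (and ν), uniformly in a. -/
open Nat Finset

/-- Upper bound `n! ≤ (n-r)! * n^r`. -/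
private lemma fac_upper {n r : ℕ} (h : r ≤ n) : n ! ≤ (n - r)! * n ^ r := by
  rw [← Nat.factorial_mul_descFactorial h]
  exact Nat.mul_le_mul_left _ (Nat.descFactorial_le_pow n r)

/-- Lower bound `(n-r)! * ((n-r)+1)^r ≤ n!` in shifted form. -/
private lemma fac_lower (n m : ℕ) : n ! * (n + 1) ^ m ≤ (n + m)! :=
  Nat.factorial_mul_pow_le_factorial

private lemma fac_mul_fac_le {m n : ℕ} : m ! * n ! ≤ (m + n)! := by
  have hd := Nat.factorial_mul_factorial_dvd_factorial (Nat.le_add_right m n)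
  rw [Nat.add_sub_cancel_left] at hd
  exact Nat.le_of_dvd (m + n).factorial_pos hd

private lemma P5 {r k : ℕ} (hr : 2 ≤ r) :
    (k + 1) ^ 2 ≤ r ^ 2 * (r + 1) ^ 2 * ((k - r) + 1) ^ (min k r) := by
  rcases lt_or_ge k r with hkr | hkr
  · have h0 : k - r = 0 := by omega
    rw [h0]
    simp only [zero_add, one_pow, mul_one]
    calc (k + 1) ^ 2 ≤ r ^ 2 := Nat.pow_le_pow_left (by omega) 2
      _ ≤ r ^ 2 * (r + 1) ^ 2 := Nat.le_mul_of_pos_right _ (by positivity)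
  · obtain ⟨m, rfl⟩ := Nat.exists_eq_add_of_le hkr
    have h1 : r + m - r = m := by omega
    have h2 : min (r + m) r = r := by omega
    rw [h1, h2]
    calc (r + m + 1) ^ 2 ≤ ((r + 1) * (m + 1)) ^ 2 := by
          apply Nat.pow_le_pow_left; nlinarith
      _ = (r + 1) ^ 2 * (m + 1) ^ 2 := mul_pow _ _ _
      _ ≤ (r + 1) ^ 2 * (m + 1) ^ r :=
          Nat.mul_le_mul_left _ (Nat.pow_le_pow_right (by omega) hr)
      _ ≤ r ^ 2 * ((r + 1) ^ 2 * (m + 1) ^ r) :=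
          Nat.le_mul_of_pos_left _ (by positivity)
      _ = r ^ 2 * (r + 1) ^ 2 * (m + 1) ^ r := by ring

/-- Main estimate for large `a` (and `2k ≤ a`). -/
private lemma main_large {r a k : ℕ} (hr : 2 ≤ r) (ha : 4 * r ≤ a) (hk : 2 * k ≤ a) :
    a ! * ((k - r)! * (a - k - r)!) * (k + 1) ^ 2 ≤
      (4 ^ r * (r ^ 2 * (r + 1) ^ 2)) * ((a - r)! * (k ! * (a - k)!)) := by
  have hra : r ≤ a := by omega
  have hP1 : a ! ≤ (a - r)! * a ^ r := fac_upper hra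
  have hP2 : (a - k - r)! * (a - k - r + 1) ^ r ≤ (a - k)! := by
    have h := fac_lower (a - k - r) r
    rwa [show a - k - r + r = a - k by omega] at h
  have hP3 : (k - r)! * ((k - r) + 1) ^ (min k r) ≤ k ! := by
    have h := fac_lower (k - r) (min k r)
    rwa [show k - r + min k r = k by omega] at h
  have hP4 : a ^ r ≤ 4 ^ r * (a - k - r + 1) ^ r := by
    calc a ^ r ≤ (4 * (a - k - r + 1)) ^ r := Nat.pow_le_pow_left (by omega) r
      _ = 4 ^ r * (a - k - r + 1) ^ r := mul_pow _ _ _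
  have hP5 := P5 (k := k) hr
  calc a ! * ((k - r)! * (a - k - r)!) * (k + 1) ^ 2
      ≤ ((a - r)! * a ^ r) * ((k - r)! * (a - k - r)!) * (k + 1) ^ 2 := by
        exact Nat.mul_le_mul_right _ (Nat.mul_le_mul_right _ hP1)
    _ = (a - r)! * ((k - r)! * (a - k - r)!) * (a ^ r * (k + 1) ^ 2) := by ring
    _ ≤ (a - r)! * ((k - r)! * (a - k - r)!) *
          ((4 ^ r * (a - k - r + 1) ^ r) * (r ^ 2 * (r + 1) ^ 2 * ((k - r) + 1) ^ (min k r))) :=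
        Nat.mul_le_mul_left _ (Nat.mul_le_mul hP4 hP5)
    _ = (4 ^ r * (r ^ 2 * (r + 1) ^ 2)) *
          ((a - r)! * (((k - r)! * ((k - r) + 1) ^ (min k r)) *
            ((a - k - r)! * (a - k - r + 1) ^ r))) := by ring
    _ ≤ (4 ^ r * (r ^ 2 * (r + 1) ^ 2)) * ((a - r)! * (k ! * (a - k)!)) :=
        Nat.mul_le_mul_left _ (Nat.mul_le_mul_left _ (Nat.mul_le_mul hP3 hP2))

/-- Main estimate for small `a`. -/
private lemma main_small {r a k : ℕ} (ha : a < 4 * r) (hk : k ≤ a) :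
    a ! * ((k - r)! * (a - k - r)!) * (k + 1) ^ 2 ≤
      ((4 * r)!) ^ 5 * ((a - r)! * (k ! * (a - k)!)) := by
  have h1 : a ! ≤ (4 * r)! := Nat.factorial_le (by omega)
  have h2' : (k - r)! ≤ (4 * r)! := Nat.factorial_le (by omega)
  have h3 : (a - k - r)! ≤ (4 * r)! := Nat.factorial_le (by omega)
  have h4 : (k + 1) ^ 2 ≤ ((4 * r)!) ^ 2 :=
    Nat.pow_le_pow_left (le_trans (by omega) (Nat.self_le_factorial (4 * r))) 2
  calc a ! * ((k - r)! * (a - k - r)!) * (k + 1) ^ 2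
      ≤ (4 * r)! * ((4 * r)! * (4 * r)!) * ((4 * r)!) ^ 2 :=
        Nat.mul_le_mul (Nat.mul_le_mul h1 (Nat.mul_le_mul h2' h3)) h4
    _ = ((4 * r)!) ^ 5 := by ring
    _ ≤ ((4 * r)!) ^ 5 * ((a - r)! * (k ! * (a - k)!)) :=
        Nat.le_mul_of_pos_right _ (by positivity)

/-- Combined estimate for `2k ≤ a`. -/
private lemma main_half {r a k : ℕ} (hr : 2 ≤ r) (hk : 2 * k ≤ a) :
    a ! * ((k - r)! * (a - k - r)!) * (k + 1) ^ 2 ≤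
      (4 ^ r * (r ^ 2 * (r + 1) ^ 2) * ((4 * r)!) ^ 5) * ((a - r)! * (k ! * (a - k)!)) := by
  rcases lt_or_ge a (4 * r) with ha | ha
  · calc a ! * ((k - r)! * (a - k - r)!) * (k + 1) ^ 2
        ≤ ((4 * r)!) ^ 5 * ((a - r)! * (k ! * (a - k)!)) := main_small ha (by omega)
      _ ≤ (4 ^ r * (r ^ 2 * (r + 1) ^ 2) * ((4 * r)!) ^ 5) * ((a - r)! * (k ! * (a - k)!)) := by
          apply Nat.mul_le_mul_right
          exact Nat.le_mul_of_pos_left _ (by positivity)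
  · calc a ! * ((k - r)! * (a - k - r)!) * (k + 1) ^ 2
        ≤ (4 ^ r * (r ^ 2 * (r + 1) ^ 2)) * ((a - r)! * (k ! * (a - k)!)) := main_large hr ha hk
      _ ≤ (4 ^ r * (r ^ 2 * (r + 1) ^ 2) * ((4 * r)!) ^ 5) * ((a - r)! * (k ! * (a - k)!)) := by
          apply Nat.mul_le_mul_right
          exact Nat.le_mul_of_pos_right _ (by positivity)

/-- Full per-term estimate with `min`. -/
private lemma main_min {r a k : ℕ} (hr : 2 ≤ r) (hk : k ≤ a) :
    a ! * ((k - r)! * (a - k - r)!) * (min k (a - k) + 1) ^ 2 ≤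
      (4 ^ r * (r ^ 2 * (r + 1) ^ 2) * ((4 * r)!) ^ 5) * ((a - r)! * (k ! * (a - k)!)) := by
  rcases le_or_gt (2 * k) a with h | h
  · rw [show min k (a - k) = k by omega]
    exact main_half hr h
  · have h2 : 2 * (a - k) ≤ a := by omega
    have hmain := main_half (a := a) (k := a - k) hr h2
    rw [show a - (a - k) = k by omega] at hmain
    rw [show min k (a - k) = a - k by omega]
    calc a ! * ((k - r)! * (a - k - r)!) * ((a - k) + 1) ^ 2
        = a ! * ((a - k - r)! * (k - r)!) * ((a - k) + 1) ^ 2 := by ring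
      _ ≤ (4 ^ r * (r ^ 2 * (r + 1) ^ 2) * ((4 * r)!) ^ 5) * ((a - r)! * ((a - k)! * k !)) :=
          hmain
      _ = (4 ^ r * (r ^ 2 * (r + 1) ^ 2) * ((4 * r)!) ^ 5) * ((a - r)! * (k ! * (a - k)!)) := by
          ring

/-- Per-term estimate with the binomial coefficient. -/
private lemma main_choose {r a k : ℕ} (hr : 2 ≤ r) (hk : k ≤ a) :
    a.choose k * ((k - r)! * (a - k - r)!) * (min k (a - k) + 1) ^ 2 ≤
      (4 ^ r * (r ^ 2 * (r + 1) ^ 2) * ((4 * r)!) ^ 5) * (a - r)! := by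
  have hper := main_min (r := r) hr hk
  rw [← Nat.choose_mul_factorial_mul_factorial hk] at hper
  have hpos : 0 < k ! * (a - k)! := by positivity
  apply Nat.le_of_mul_le_mul_right _ hpos
  calc a.choose k * ((k - r)! * (a - k - r)!) * (min k (a - k) + 1) ^ 2 * (k ! * (a - k)!)
      = a.choose k * k ! * (a - k)! * ((k - r)! * (a - k - r)!) * (min k (a - k) + 1) ^ 2 := by
        ring
    _ ≤ (4 ^ r * (r ^ 2 * (r + 1) ^ 2) * ((4 * r)!) ^ 5) * ((a - r)! * (k ! * (a - k)!)) :=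
        hper
    _ = (4 ^ r * (r ^ 2 * (r + 1) ^ 2) * ((4 * r)!) ^ 5) * (a - r)! * (k ! * (a - k)!) := by
        ring

private lemma ratio_le_one {r a k : ℕ} (hk : k ≤ a) :
    (k - r)! * (a - k - r)! ≤ (a - r)! :=
  le_trans fac_mul_fac_le (Nat.factorial_le (by omega))

private lemma basel_aux :
    ∀ m : ℕ, ∑ k ∈ range (m + 1), (1 : ℝ) / ((k : ℝ) + 1) ^ 2 ≤ 2 - 1 / ((m : ℝ) + 1)
  | 0 => by norm_num
  | (p + 1) => by
    rw [Finset.sum_range_succ]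
    have ih := basel_aux p
    push_cast
    push_cast at ih
    set x : ℝ := (p : ℝ) with hx
    have hx0 : (0 : ℝ) ≤ x := by rw [hx]; positivity
    have e : 1 / (x + 1) - 1 / (x + 1 + 1) = 1 / ((x + 1) * (x + 1 + 1)) := by
      field_simp
      ring
    have key : (1 : ℝ) / (x + 1 + 1) ^ 2 ≤ 1 / (x + 1) - 1 / (x + 1 + 1) := by
      rw [e]
      apply one_div_le_one_div_of_le (by positivity)
      nlinarith
    linarith

private lemma basel (n : ℕ) : ∑ k ∈ range n, (1 : ℝ) / ((k : ℝ) + 1) ^ 2 ≤ 2 := by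
  cases n with
  | zero => simp
  | succ m =>
    refine le_trans (basel_aux m) ?_
    have : (0 : ℝ) < (m : ℝ) + 1 := by positivity
    have h2 : (0 : ℝ) ≤ 1 / ((m : ℝ) + 1) := by positivity
    linarith

/-- One-dimensional combinatorial lemma: for `ν ≥ 1` and `r ≥ 2` there is a
constant `B > 0` (depending only on `r` and `ν`) such that for every `a ∈ ℕ`,
`∑_{k=0}^{a} binom(a,k) · ((k∸r)! · ((a−k)∸r)! / (a∸r)!)^ν ≤ B`. -/
theorem stmt3 (ν : ℝ) (hν : 1 ≤ ν) (r : ℕ) (hr : 2 ≤ r) :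
    ∃ B : ℝ, 0 < B ∧ ∀ a : ℕ,
      ∑ k ∈ Finset.range (a + 1),
        (a.choose k : ℝ) *
          ((((k - r).factorial * ((a - k) - r).factorial : ℕ) : ℝ) /
            (((a - r).factorial : ℕ) : ℝ)) ^ ν ≤ B := by
  set Kc : ℕ := 4 ^ r * (r ^ 2 * (r + 1) ^ 2) * ((4 * r)!) ^ 5 with hKc
  have hKposn : 0 < Kc := by positivity
  have hKpos : (0 : ℝ) < (Kc : ℝ) := by exact_mod_cast hKposn
  refine ⟨4 * (Kc : ℝ), by positivity, fun a => ?_⟩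
  have hterm : ∀ k ∈ range (a + 1),
      (a.choose k : ℝ) *
          ((((k - r).factorial * ((a - k) - r).factorial : ℕ) : ℝ) /
            (((a - r).factorial : ℕ) : ℝ)) ^ ν ≤
        (Kc : ℝ) / (((min k (a - k) : ℕ) : ℝ) + 1) ^ 2 := by
    intro k hkmem
    have hk : k ≤ a := Nat.lt_succ_iff.mp (mem_range.mp hkmem)
    have hnum : (0 : ℝ) < (((k - r)! * ((a - k) - r)! : ℕ) : ℝ) := by
      have : 0 < (k - r)! * ((a - k) - r)! := by positivity
      exact_mod_cast this
    have hden : (0 : ℝ) < (((a - r)! : ℕ) : ℝ) := by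
      have : 0 < (a - r)! := Nat.factorial_pos _
      exact_mod_cast this
    have hle1 : (((k - r)! * ((a - k) - r)! : ℕ) : ℝ) / (((a - r)! : ℕ) : ℝ) ≤ 1 := by
      rw [div_le_one hden]
      exact_mod_cast ratio_le_one (r := r) hk
    have hrpow : ((((k - r)! * ((a - k) - r)! : ℕ) : ℝ) / (((a - r)! : ℕ) : ℝ)) ^ ν ≤
        (((k - r)! * ((a - k) - r)! : ℕ) : ℝ) / (((a - r)! : ℕ) : ℝ) := by
      have h := Real.rpow_le_rpow_of_exponent_ge (by positivity) hle1 hν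
      rwa [Real.rpow_one] at h
    have hmono :
        (a.choose k : ℝ) *
            ((((k - r)! * ((a - k) - r)! : ℕ) : ℝ) / (((a - r)! : ℕ) : ℝ)) ^ ν ≤
          (a.choose k : ℝ) *
            ((((k - r)! * ((a - k) - r)! : ℕ) : ℝ) / (((a - r)! : ℕ) : ℝ)) :=
      mul_le_mul_of_nonneg_left hrpow (by positivity)
    refine le_trans hmono ?_
    have hnat := main_choose (r := r) (a := a) (k := k) hr hk
    rw [mul_div_assoc']
    rw [div_le_div_iff₀ hden (by positivity)]
    exact_mod_cast hnat
  have hrefl : ∑ k ∈ range (a + 1), (Kc : ℝ) / (((a - k : ℕ) : ℝ) + 1) ^ 2 =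
      ∑ k ∈ range (a + 1), (Kc : ℝ) / ((k : ℝ) + 1) ^ 2 := by
    rw [← Finset.sum_range_reflect (fun j => (Kc : ℝ) / ((j : ℝ) + 1) ^ 2) (a + 1)]
    refine Finset.sum_congr rfl fun k hk => ?_
    have h : a + 1 - 1 - k = a - k := by omega
    simp [h]
  have hbasel : ∑ k ∈ range (a + 1), (Kc : ℝ) / ((k : ℝ) + 1) ^ 2 ≤ 2 * (Kc : ℝ) := by
    have he : ∑ k ∈ range (a + 1), (Kc : ℝ) / ((k : ℝ) + 1) ^ 2 =
        (Kc : ℝ) * ∑ k ∈ range (a + 1), 1 / ((k : ℝ) + 1) ^ 2 := by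
      rw [Finset.mul_sum]
      exact Finset.sum_congr rfl fun k _ => by rw [mul_one_div]
    rw [he]
    calc (Kc : ℝ) * ∑ k ∈ range (a + 1), 1 / ((k : ℝ) + 1) ^ 2 ≤ (Kc : ℝ) * 2 :=
          mul_le_mul_of_nonneg_left (basel (a + 1)) hKpos.le
      _ = 2 * (Kc : ℝ) := by ring
  calc ∑ k ∈ Finset.range (a + 1),
        (a.choose k : ℝ) *
          ((((k - r).factorial * ((a - k) - r).factorial : ℕ) : ℝ) /
            (((a - r).factorial : ℕ) : ℝ)) ^ ν
      ≤ ∑ k ∈ range (a + 1), (Kc : ℝ) / (((min k (a - k) : ℕ) : ℝ) + 1) ^ 2 :=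
        Finset.sum_le_sum hterm
    _ ≤ ∑ k ∈ range (a + 1),
          ((Kc : ℝ) / ((k : ℝ) + 1) ^ 2 + (Kc : ℝ) / (((a - k : ℕ) : ℝ) + 1) ^ 2) := by
        refine Finset.sum_le_sum fun k _ => ?_
        rcases le_total k (a - k) with h | h
        · rw [min_eq_left h]
          exact le_add_of_nonneg_right (by positivity)
        · rw [min_eq_right h]
          exact le_add_of_nonneg_left (by positivity)
    _ = ∑ k ∈ range (a + 1), (Kc : ℝ) / ((k : ℝ) + 1) ^ 2 +
          ∑ k ∈ range (a + 1), (Kc : ℝ) / (((a - k : ℕ) : ℝ) + 1) ^ 2 :=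
        Finset.sum_add_distrib
    _ = 2 * ∑ k ∈ range (a + 1), (Kc : ℝ) / ((k : ℝ) + 1) ^ 2 := by rw [hrefl]; ring
    _ ≤ 2 * (2 * (Kc : ℝ)) := by linarith [hbasel]
    _ = 4 * (Kc : ℝ) := by ring
end
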